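/- arXiv:2110.01413 — 3 statements merged into one kernel-verified Lean document; each statement's English description precedes it below -/
import Mathlib

section
/- Under the identification of the previous statement, the composite of the inverse isomorphism ker(f_C) ≅ ker((g₂,-f_B))/im((g₁,f_A)) with the map induced by projection B₁ ⊕ A₂ → A₂ → coker(f_A) equals the snake-lemma connecting homomorphism δ : ker(f_C) → coker(f_A). -/
/-- In the snake-lemma setup for abelian groups, let
`θ : ker((g₂,-f_B))/im((g₁,f_A)) ≃ ker f_C` be the isomorphism induced by
`(b, a) ↦ π₁ b`, let `φ` be the homomorphism on the same quotient induced by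
`(b, a) ↦ [a] ∈ coker f_A`, and let `δ : ker f_C → coker f_A` be the snake-lemma
connecting homomorphism (characterized by its usual formula).  Then
`φ ∘ θ⁻¹ = δ`. -/
theorem stmt_5 {A₁ B₁ C₁ A₂ B₂ C₂ : Type} [AddCommGroup A₁] [AddCommGroup B₁]
    [AddCommGroup C₁] [AddCommGroup A₂] [AddCommGroup B₂] [AddCommGroup C₂]
    (g₁ : A₁ →+ B₁) (π₁ : B₁ →+ C₁) (g₂ : A₂ →+ B₂) (π₂ : B₂ →+ C₂)
    (fA : A₁ →+ A₂) (fB : B₁ →+ B₂) (fC : C₁ →+ C₂)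
    (hg₁ : Function.Injective g₁) (hπ₁ : Function.Surjective π₁) (hex₁ : g₁.range = π₁.ker)
    (hg₂ : Function.Injective g₂) (hπ₂ : Function.Surjective π₂) (hex₂ : g₂.range = π₂.ker)
    (hsq₁ : fB.comp g₁ = g₂.comp fA) (hsq₂ : fC.comp π₁ = π₂.comp fB)
    (α : A₁ →+ B₁ × A₂) (β : B₁ × A₂ →+ B₂)
    (hα : ∀ a, α a = (g₁ a, fA a)) (hβ : ∀ x : B₁ × A₂, β x = g₂ x.2 - fB x.1)
    -- `θ` is the isomorphism induced by `(b, a) ↦ π₁ b`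
    (θ : (↥β.ker ⧸ α.range.addSubgroupOf β.ker) ≃+ ↥fC.ker)
    (hθ : ∀ x : ↥β.ker, ((θ (QuotientAddGroup.mk x) : C₁)) = π₁ (x : B₁ × A₂).1)
    -- `φ` is the homomorphism induced by `(b, a) ↦ [a] ∈ coker f_A`
    (φ : (↥β.ker ⧸ α.range.addSubgroupOf β.ker) →+ A₂ ⧸ fA.range)
    (hφ : ∀ x : ↥β.ker,
      φ (QuotientAddGroup.mk x) = QuotientAddGroup.mk ((x : B₁ × A₂).2))
    -- `δ` is the snake-lemma connecting homomorphism
    (δ : ↥fC.ker →+ A₂ ⧸ fA.range)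
    (hδ : ∀ (c : ↥fC.ker) (b : B₁) (a : A₂),
      π₁ b = (c : C₁) → g₂ a = fB b → δ c = QuotientAddGroup.mk a) :
    ∀ c : ↥fC.ker, φ (θ.symm c) = δ c := by
  intro c
  obtain ⟨x, hx⟩ := QuotientAddGroup.mk_surjective (θ.symm c)
  have hc : θ (QuotientAddGroup.mk x) = c := by rw [hx]; exact θ.apply_symm_apply c
  have hβx : β (x : B₁ × A₂) = 0 := x.2
  rw [hβ] at hβx
  have hga : g₂ (x : B₁ × A₂).2 = fB (x : B₁ × A₂).1 := by
    have := sub_eq_zero.mp hβx; exact this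
  have hπ : π₁ (x : B₁ × A₂).1 = (c : C₁) := by
    rw [← hθ x, hc]
  rw [← hx, hφ x, hδ c _ _ hπ hga]
end

section
/- Every virtually cyclic group is either finite, or finite-by-(infinite cyclic), or finite-by-(infinite dihedral): i.e., if G contains a cyclic subgroup of finite index, then G is finite, or there is an exact sequence 1 → H → G → ℤ → 1 with H finite, or an exact sequence 1 → H → G → D_∞ → 1 with H finite. -/
/-- The infinite dihedral group `D_∞ = ℤ/2 * ℤ/2`. -/
abbrev DInf : Type := Monoid.Coprod (Multiplicative (ZMod 2)) (Multiplicative (ZMod 2))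

open Subgroup

namespace VCAux

lemma mz_eq_one_of_pow {z : Multiplicative ℤ} {n : ℕ} (hn : n ≠ 0) (h : z ^ n = 1) : z = 1 := by
  have h2 : (n : ℤ) * z.toAdd = 0 := by
    have := congrArg Multiplicative.toAdd h
    simpa [toAdd_pow, nsmul_eq_mul] using this
  rcases mul_eq_zero.1 h2 with h' | h'
  · exact absurd (by exact_mod_cast h') hn
  · exact Multiplicative.toAdd.injective (by simpa using h')

lemma mz_zpow_eq_one {z : Multiplicative ℤ} (hz : z ≠ 1) {k : ℤ} (h : z ^ k = 1) : k = 0 := by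
  have h2 : k * z.toAdd = 0 := by
    have := congrArg Multiplicative.toAdd h
    simpa [toAdd_zpow, zsmul_eq_mul] using this
  rcases mul_eq_zero.1 h2 with h' | h'
  · exact h'
  · exact absurd (Multiplicative.toAdd.injective (by simpa using h')) hz

lemma mz_not_isOfFinOrder {z : Multiplicative ℤ} (hz : z ≠ 1) : ¬IsOfFinOrder z := fun h => by
  obtain ⟨n, hn, h1⟩ := isOfFinOrder_iff_pow_eq_one.1 h
  exact hz (mz_eq_one_of_pow hn.ne' h1)

lemma mz_eq_one_of_isOfFinOrder {z : Multiplicative ℤ} (h : IsOfFinOrder z) : z = 1 := by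
  by_contra hz
  exact mz_not_isOfFinOrder hz h

lemma exists_mulEquiv_zpowers {G : Type*} [Group G] (g : G) (hg : ¬IsOfFinOrder g) :
    ∃ ϕ : ↥(zpowers g) ≃* Multiplicative ℤ,
      ∀ (k : ℤ) (h : g ^ k ∈ zpowers g), ϕ ⟨g ^ k, h⟩ = Multiplicative.ofAdd k := by
  have hmem : ∀ k : Multiplicative ℤ, g ^ k.toAdd ∈ zpowers g := fun k =>
    zpow_mem (mem_zpowers g) _
  let m : Multiplicative ℤ →* ↥(zpowers g) :=
    { toFun := fun k => ⟨g ^ k.toAdd, hmem k⟩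
      map_one' := by ext; simp
      map_mul' := fun a b => by ext; simp [zpow_add] }
  have hinj : Function.Injective m := by
    intro x y hxy
    have h1 : g ^ x.toAdd = g ^ y.toAdd := congrArg Subtype.val hxy
    exact Multiplicative.toAdd.injective (injective_zpow_iff_not_isOfFinOrder.2 hg h1)
  have hsurj : Function.Surjective m := by
    rintro ⟨x, hx⟩
    obtain ⟨k, hk⟩ := mem_zpowers_iff.1 hx
    exact ⟨Multiplicative.ofAdd k, Subtype.ext (by simpa [m] using hk)⟩
  refine ⟨(MulEquiv.ofBijective m ⟨hinj, hsurj⟩).symm, fun k h => ?_⟩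
  have h1 : m (Multiplicative.ofAdd k) = ⟨g ^ k, h⟩ := Subtype.ext (by simp [m])
  rw [MulEquiv.symm_apply_eq, ← h1]
  rfl

lemma exists_hom_zmod2 {Q : Type*} [Group Q] (q : Q) (hq : q ^ 2 = 1) :
    ∃ f : Multiplicative (ZMod 2) →* Q, f (Multiplicative.ofAdd 1) = q := by
  have h2 : (zmultiplesHom (Additive Q) (Additive.ofMul q)) (2 : ℤ) = 0 := by
    have h3 : ((2 : ℤ) • Additive.ofMul q) = Additive.ofMul (q ^ (2 : ℤ)) := (ofMul_zpow _ _).symm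
    have h4 : q ^ (2 : ℤ) = 1 := by
      show q ^ ((2 : ℕ) : ℤ) = 1
      rw [zpow_natCast, hq]
    simp only [zmultiplesHom_apply, h3, h4, ofMul_one]
  refine ⟨AddMonoidHom.toMultiplicativeLeft (ZMod.lift 2 ⟨zmultiplesHom _ (Additive.ofMul q), h2⟩), ?_⟩
  have h1 : ((1 : ℤ) : ZMod 2) = 1 := by norm_num
  show Additive.toMul ((ZMod.lift 2 ⟨zmultiplesHom _ (Additive.ofMul q), h2⟩) (1 : ZMod 2)) = q
  rw [← h1, ZMod.lift_coe]
  simp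

lemma core {G : Type*} [Group G] (g : G) (hg : ¬IsOfFinOrder g)
    [hfi : (zpowers g).FiniteIndex] (hc : ∀ x : G, x * g = g * x) :
    ∃ ψ : G →* Multiplicative ℤ,
      (∀ k : ℤ, ψ (g ^ k) = Multiplicative.ofAdd (k * (zpowers g).index)) ∧
      Finite ψ.ker ∧ (∀ x, x ∈ ψ.ker ↔ IsOfFinOrder x) := by
  obtain ⟨ϕ, hϕ⟩ := exists_mulEquiv_zpowers g hg
  set n : ℕ := (zpowers g).index with hn
  have hn0 : n ≠ 0 := hfi.index_ne_zero
  have hcom : ∀ (x : G) (k : ℤ), Commute x (g ^ k) := fun x k =>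
    Commute.zpow_right (hc x) k
  let ψ : G →* Multiplicative ℤ := MonoidHom.transfer ϕ.toMonoidHom
  have hψ : ∀ k : ℤ, ψ (g ^ k) = Multiplicative.ofAdd (k * n) := by
    intro k
    have key : ∀ (j : ℕ) (g₀ : G), g₀⁻¹ * (g ^ k) ^ j * g₀ ∈ zpowers g →
        g₀⁻¹ * (g ^ k) ^ j * g₀ = (g ^ k) ^ j := by
      intro j g₀ _
      have h1 : g₀ * (g ^ k) ^ j = (g ^ k) ^ j * g₀ := Commute.pow_right (hcom g₀ k) j
      rw [mul_assoc, ← h1, ← mul_assoc, inv_mul_cancel, one_mul]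
    have h2 := MonoidHom.transfer_eq_pow ϕ.toMonoidHom (g ^ k) key
    have h3 : (g ^ k) ^ ((zpowers g).index) = g ^ (k * n) := by
      rw [← zpow_natCast, ← zpow_mul, hn]
    calc ψ (g ^ k) = ϕ ⟨(g ^ k) ^ ((zpowers g).index), _⟩ := h2
      _ = ϕ ⟨g ^ (k * n), zpow_mem (mem_zpowers g) _⟩ := congrArg ϕ (Subtype.ext h3)
      _ = Multiplicative.ofAdd (k * n) := hϕ _ _
  have hinj : Function.Injective (fun x : ψ.ker => (QuotientGroup.mk x.1 : G ⧸ zpowers g)) := by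
    rintro ⟨x, hx⟩ ⟨y, hy⟩ hxy
    simp only at hxy
    rw [QuotientGroup.eq] at hxy
    obtain ⟨k, hk⟩ := mem_zpowers_iff.1 hxy
    have h5 : ψ (x⁻¹ * y) = 1 := by
      rw [map_mul, map_inv, MonoidHom.mem_ker.1 hx, MonoidHom.mem_ker.1 hy,
        inv_one, one_mul]
    rw [← hk, hψ] at h5
    have h6 : k * (n : ℤ) = 0 := Multiplicative.ofAdd.injective (h5.trans ofAdd_zero.symm)
    have h7 : k = 0 := by
      rcases mul_eq_zero.1 h6 with h | h
      · exact h
      · exact absurd (by exact_mod_cast h) hn0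
    rw [h7, zpow_zero] at hk
    exact Subtype.ext (inv_mul_eq_one.1 hk.symm)
  have hfin : Finite ψ.ker := Finite.of_injective _ hinj
  refine ⟨ψ, hψ, hfin, fun x => ⟨fun hx => ?_, fun hx => ?_⟩⟩
  · haveI := hfin
    have h9 : IsOfFinOrder (⟨x, hx⟩ : ψ.ker) := isOfFinOrder_of_finite _
    obtain ⟨m, hm, hm1⟩ := isOfFinOrder_iff_pow_eq_one.1 h9
    refine isOfFinOrder_iff_pow_eq_one.2 ⟨m, hm, ?_⟩
    simpa using congrArg Subtype.val hm1
  · have h8 : IsOfFinOrder (ψ x) := MonoidHom.isOfFinOrder ψ hx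
    exact MonoidHom.mem_ker.2 (mz_eq_one_of_isOfFinOrder h8)

lemma toZ {G : Type*} [Group G] (ψ : G →* Multiplicative ℤ) (hfin : Finite ψ.ker)
    {x0 : G} (hx0 : ψ x0 ≠ 1) :
    ∃ φ : G →* Multiplicative ℤ, Function.Surjective φ ∧ Finite φ.ker := by
  obtain ⟨zz, hzz⟩ := IsCyclic.exists_generator (α := ↥ψ.range)
  set z : Multiplicative ℤ := (zz : Multiplicative ℤ) with hzdef
  have hsub : ∀ y : G, ψ y ∈ zpowers z := by
    intro y
    obtain ⟨k, hk⟩ := mem_zpowers_iff.1 (hzz ⟨ψ y, MonoidHom.mem_range.2 ⟨y, rfl⟩⟩)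
    refine mem_zpowers_iff.2 ⟨k, ?_⟩
    have := congrArg Subtype.val hk
    simpa using this
  have hzne : z ≠ 1 := by
    intro h
    obtain ⟨k, hk⟩ := mem_zpowers_iff.1 (hsub x0)
    rw [h, one_zpow] at hk
    exact hx0 hk.symm
  obtain ⟨e, he⟩ := exists_mulEquiv_zpowers z (mz_not_isOfFinOrder hzne)
  let ψ' : G →* ↥(zpowers z) := ψ.codRestrict _ hsub
  have hsurj' : Function.Surjective ψ' := by
    rintro ⟨w, hw⟩
    obtain ⟨k, hk⟩ := mem_zpowers_iff.1 hw
    obtain ⟨y0, hy0⟩ := MonoidHom.mem_range.1 zz.2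
    refine ⟨y0 ^ k, Subtype.ext ?_⟩
    show ψ (y0 ^ k) = w
    rw [map_zpow, hy0]
    exact hk
  refine ⟨e.toMonoidHom.comp ψ', e.surjective.comp hsurj', ?_⟩
  have hkeq : (e.toMonoidHom.comp ψ').ker = ψ.ker := by
    ext y
    simp only [MonoidHom.mem_ker, MonoidHom.comp_apply]
    constructor
    · intro h
      have h1 : ψ' y = 1 := e.injective (by rw [map_one]; exact h)
      simpa [ψ', Subtype.ext_iff] using h1
    · intro h
      have h1 : ψ' y = 1 := by
        apply Subtype.ext
        simpa [ψ'] using h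
      rw [h1]
      exact map_one _
  rw [hkeq]
  exact hfin

set_option maxHeartbeats 1000000 in
lemma dihedral {G : Type*} [Group G] (g t : G) (hg : ¬IsOfFinOrder g)
    [hfiN : (zpowers g).FiniteIndex]
    (hdi : ∀ x : G, x * g * x⁻¹ = g ∨ x * g * x⁻¹ = g⁻¹)
    (ht : t * g * t⁻¹ = g⁻¹) :
    ∃ φ : G →* DInf, Function.Surjective φ ∧ Finite φ.ker := by
  classical
  set C : Subgroup G := Subgroup.centralizer {g} with hCdef
  have memC : ∀ x : G, x ∈ C ↔ x * g = g * x := fun x =>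
    Subgroup.mem_centralizer_singleton_iff
  have hgC : g ∈ C := (memC g).2 rfl
  have hgg : g ≠ g⁻¹ := by
    intro h
    apply hg
    refine isOfFinOrder_iff_pow_eq_one.2 ⟨2, two_pos, ?_⟩
    rw [pow_two]
    nth_rewrite 2 [h]
    exact mul_inv_cancel g
  have htC : t ∉ C := by
    intro hc
    have h1 : t * g = g * t := (memC t).1 hc
    have h2 : t * g * t⁻¹ = g := by rw [h1, mul_assoc, mul_inv_cancel, mul_one]
    exact hgg (h2.symm.trans ht)
  have ht' : t * g⁻¹ * t⁻¹ = g := by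
    have h1 : t * g⁻¹ * t⁻¹ = (t * g * t⁻¹)⁻¹ := by group
    rw [h1, ht, inv_inv]
  have hcoset : ∀ x : G, x ∈ C ∨ t⁻¹ * x ∈ C := by
    intro x
    rcases hdi x with h | h
    · left
      rw [memC]
      rw [mul_inv_eq_iff_eq_mul] at h
      exact h
    · right
      rw [memC, ← mul_inv_eq_iff_eq_mul]
      have h2 : (t⁻¹ * x) * g * (t⁻¹ * x)⁻¹ = t⁻¹ * (x * g * x⁻¹) * t := by group
      have h3 : t⁻¹ * g⁻¹ * t = g := by rw [← ht]; group
      rw [h2, h, h3]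
  have hconjC : ∀ (h x : G), x ∈ C → h * x * h⁻¹ ∈ C := by
    intro h x hx
    rw [memC] at hx ⊢
    have hx' : Commute x g := hx
    rcases hdi h with hh | hh
    · have hco : Commute h g := mul_inv_eq_iff_eq_mul.1 hh
      exact Commute.mul_left (Commute.mul_left hco hx') hco.inv_left
    · have hxinv : x * g⁻¹ = g⁻¹ * x := hx'.inv_right
      have hh2 : h⁻¹ * g * h = g⁻¹ := by
        have h1 : h⁻¹ * g * h = (h⁻¹ * g⁻¹ * h)⁻¹ := by group
        have h2 : h⁻¹ * g⁻¹ * h = g := by rw [← hh]; group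
        rw [h1, h2]
      have h3 : (h * x * h⁻¹) * g * (h * x * h⁻¹)⁻¹ = h * (x * (h⁻¹ * g * h) * x⁻¹) * h⁻¹ := by
        group
      rw [hh2] at h3
      have h4 : x * g⁻¹ * x⁻¹ = g⁻¹ := by rw [hxinv, mul_assoc, mul_inv_cancel, mul_one]
      rw [h4] at h3
      have h5 : h * g⁻¹ * h⁻¹ = g := by
        have h6 : h * g⁻¹ * h⁻¹ = (h * g * h⁻¹)⁻¹ := by group
        rw [h6, hh, inv_inv]
      rw [h5] at h3
      rw [mul_inv_eq_iff_eq_mul] at h3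
      exact h3
  set gC : ↥C := ⟨g, hgC⟩ with hgCdef
  have hgCord : ¬IsOfFinOrder gC := by
    intro h
    obtain ⟨m, hm, hm1⟩ := isOfFinOrder_iff_pow_eq_one.1 h
    exact hg (isOfFinOrder_iff_pow_eq_one.2 ⟨m, hm, by simpa using congrArg Subtype.val hm1⟩)
  have hNC : zpowers gC = (zpowers g).subgroupOf C := by
    ext x
    rw [mem_zpowers_iff, Subgroup.mem_subgroupOf, mem_zpowers_iff]
    constructor
    · rintro ⟨k, hk⟩; exact ⟨k, by simpa using congrArg Subtype.val hk⟩
    · rintro ⟨k, hk⟩; exact ⟨k, Subtype.ext (by simpa using hk)⟩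
  haveI hfiNC : (zpowers gC).FiniteIndex := by rw [hNC]; infer_instance
  have hcC : ∀ x : ↥C, x * gC = gC * x := fun x => Subtype.ext ((memC (x : G)).1 x.2)
  obtain ⟨ψ0, hψ0, hker0, hkerc0⟩ := core gC hgCord hcC
  set n : ℕ := (zpowers gC).index with hndef
  set T : Subgroup G := ψ0.ker.map C.subtype with hTdef
  have hTle : T ≤ C := Subgroup.map_subtype_le _
  have hTmem : ∀ (x : G) (hx : x ∈ C), (x ∈ T ↔ ψ0 ⟨x, hx⟩ = 1) := by
    intro x hx
    constructor
    · intro hxT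
      obtain ⟨y, hy, hyx⟩ := Subgroup.mem_map.1 hxT
      have h1 : y = ⟨x, hx⟩ := Subtype.ext hyx
      rw [← h1]
      exact MonoidHom.mem_ker.1 hy
    · intro h
      exact Subgroup.mem_map.2 ⟨⟨x, hx⟩, MonoidHom.mem_ker.2 h, rfl⟩
  have hTfin : Finite ↥T := by
    haveI := hker0
    exact Finite.of_equiv _
      (Subgroup.equivMapOfInjective ψ0.ker C.subtype C.subtype_injective).toEquiv
  have hTfo : ∀ x : G, x ∈ T ↔ x ∈ C ∧ IsOfFinOrder x := by
    intro x
    constructor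
    · intro hx
      have hxC := hTle hx
      refine ⟨hxC, ?_⟩
      have h1 : IsOfFinOrder (⟨x, hxC⟩ : ↥C) :=
        (hkerc0 ⟨x, hxC⟩).1 (MonoidHom.mem_ker.2 ((hTmem x hxC).1 hx))
      obtain ⟨m, hm, hm1⟩ := isOfFinOrder_iff_pow_eq_one.1 h1
      exact isOfFinOrder_iff_pow_eq_one.2 ⟨m, hm, by simpa using congrArg Subtype.val hm1⟩
    · rintro ⟨hxC, hfo⟩
      apply (hTmem x hxC).2
      apply MonoidHom.mem_ker.1
      apply (hkerc0 ⟨x, hxC⟩).2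
      obtain ⟨m, hm, hm1⟩ := isOfFinOrder_iff_pow_eq_one.1 hfo
      exact isOfFinOrder_iff_pow_eq_one.2 ⟨m, hm, Subtype.ext (by simpa using hm1)⟩
  haveI hTnormal : T.Normal := by
    constructor
    intro x hx h
    rw [hTfo] at hx ⊢
    refine ⟨hconjC h x hx.1, ?_⟩
    obtain ⟨m, hm, hm1⟩ := isOfFinOrder_iff_pow_eq_one.1 hx.2
    refine isOfFinOrder_iff_pow_eq_one.2 ⟨m, hm, ?_⟩
    rw [conj_pow, hm1, mul_one, mul_inv_cancel]
  -- conjugation by t as a hom of C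
  have hμmem : ∀ x : ↥C, t * (x : G) * t⁻¹ ∈ C := fun x => hconjC t x x.2
  let μ : ↥C →* ↥C := MonoidHom.mk' (fun x => ⟨t * (x : G) * t⁻¹, hμmem x⟩)
    (fun a b => Subtype.ext (by push_cast; group))
  have hμapp : ∀ x : ↥C, ((μ x : ↥C) : G) = t * (x : G) * t⁻¹ := fun x => rfl
  haveI hNCnormal : (zpowers gC).Normal := by
    constructor
    intro x hx y
    obtain ⟨k, hk⟩ := mem_zpowers_iff.1 hx
    have hcomm : y * x = x * y := by
      rw [← hk]
      exact Commute.zpow_right (hcC y) k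
    have h1 : y * x * y⁻¹ = x := by rw [hcomm, mul_assoc, mul_inv_cancel, mul_one]
    rw [h1]
    exact hx
  have hμg : ∀ k : ℤ, μ (gC ^ k) = gC ^ (-k) := by
    intro k
    apply Subtype.ext
    have h1 : ((gC ^ k : ↥C) : G) = g ^ k := by simp [hgCdef]
    have h2 : ((gC ^ (-k) : ↥C) : G) = g ^ (-k) := by simp [hgCdef]
    rw [hμapp, h1, h2]
    calc t * g ^ k * t⁻¹ = (t * g * t⁻¹) ^ k := by rw [conj_zpow]
      _ = (g⁻¹) ^ k := by rw [ht]
      _ = g ^ (-k) := by rw [inv_zpow, zpow_neg]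
  set δ : ↥C →* Multiplicative ℤ := (ψ0.comp μ) * ψ0 with hδdef
  have hNle : zpowers gC ≤ δ.ker := by
    rw [zpowers_le, MonoidHom.mem_ker]
    have h0 : δ gC = ψ0 (μ gC) * ψ0 gC := rfl
    have h1 : μ gC = gC ^ (-1 : ℤ) := by
      have := hμg 1
      rwa [zpow_one] at this
    have h2 : ψ0 gC = ψ0 (gC ^ (1 : ℤ)) := by rw [zpow_one]
    rw [h0, h1, h2, hψ0, hψ0]
    rw [← ofAdd_add]
    norm_num
  have hδ1 : ∀ x : ↥C, δ x = 1 := by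
    intro x
    have hfo : IsOfFinOrder ((x : ↥C ⧸ zpowers gC)) := isOfFinOrder_of_finite _
    have h2 : (QuotientGroup.lift (zpowers gC) δ hNle) ((x : ↥C ⧸ zpowers gC)) = δ x :=
      QuotientGroup.lift_mk' _ _ _
    rw [← h2]
    exact mz_eq_one_of_isOfFinOrder (MonoidHom.isOfFinOrder _ hfo)
  have hinv : ∀ x : ↥C, ψ0 (μ x) = (ψ0 x)⁻¹ := by
    intro x
    have h1 := hδ1 x
    have h0 : δ x = ψ0 (μ x) * ψ0 x := rfl
    rw [h0] at h1
    exact eq_inv_of_mul_eq_one_left h1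
  have ht2C : t ^ 2 ∈ C := by
    rw [memC]
    have h1 : t * g⁻¹ = g * t := by
      have h := ht'
      rw [mul_inv_eq_iff_eq_mul] at h
      exact h
    have h2 : t * g = g⁻¹ * t := by
      have h := ht
      rw [mul_inv_eq_iff_eq_mul] at h
      exact h
    calc t ^ 2 * g = t * (t * g) := by rw [pow_two, mul_assoc]
      _ = t * g⁻¹ * t := by rw [h2, ← mul_assoc]
      _ = g * t * t := by rw [h1]
      _ = g * t ^ 2 := by rw [pow_two, mul_assoc]
  have hψ0t2 : ψ0 ⟨t ^ 2, ht2C⟩ = 1 := by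
    have h1 : μ ⟨t ^ 2, ht2C⟩ = ⟨t ^ 2, ht2C⟩ := Subtype.ext (by
      rw [hμapp]
      group)
    have h2 := hinv ⟨t ^ 2, ht2C⟩
    rw [h1] at h2
    have h3 : ψ0 ⟨t ^ 2, ht2C⟩ ^ 2 = 1 := by
      rw [pow_two]
      nth_rewrite 1 [h2]
      rw [inv_mul_cancel]
    exact mz_eq_one_of_pow (by norm_num) h3
  have ht2T : t ^ 2 ∈ T := (hTmem _ ht2C).2 hψ0t2
  -- generator of the range
  obtain ⟨zz, hzz⟩ := IsCyclic.exists_generator (α := ↥ψ0.range)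
  set z : Multiplicative ℤ := (zz : Multiplicative ℤ) with hzdef
  have hrange : ∀ x : ↥C, ∃ k : ℤ, ψ0 x = z ^ k := by
    intro x
    obtain ⟨k, hk⟩ := mem_zpowers_iff.1 (hzz ⟨ψ0 x, MonoidHom.mem_range.2 ⟨x, rfl⟩⟩)
    exact ⟨k, by simpa using (congrArg Subtype.val hk).symm⟩
  have hn0 : n ≠ 0 := hfiNC.index_ne_zero
  have hzne : z ≠ 1 := by
    intro h
    obtain ⟨k, hk⟩ := hrange gC
    have h1 := hψ0 1
    rw [zpow_one] at h1
    rw [h1, h, one_zpow] at hk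
    have h2 := Multiplicative.ofAdd.injective (hk.trans ofAdd_zero.symm)
    simp only [one_mul] at h2
    exact hn0 (by exact_mod_cast h2)
  obtain ⟨cC, hcC'⟩ := MonoidHom.mem_range.1 zz.2
  set c : G := (cC : G) with hcdef
  -- quotient
  let π : G →* G ⧸ T := QuotientGroup.mk' T
  have hπ : ∀ x : G, π x = 1 ↔ x ∈ T := fun x => QuotientGroup.eq_one_iff x
  have hta2 : (π t) ^ 2 = 1 := by
    rw [← map_pow]
    exact (hπ _).2 ht2T
  obtain ⟨fa, hfa⟩ := exists_hom_zmod2 (π t) hta2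
  have htc2C : (t * c) ^ 2 ∈ C := by
    have h0 : (t * c) ^ 2 = (t * c * t⁻¹) * (t ^ 2) * c := by
      rw [pow_two, pow_two]; group
    rw [h0]
    exact mul_mem (mul_mem (hconjC t c cC.2) ht2C) cC.2
  have htc2T : (t * c) ^ 2 ∈ T := by
    apply (hTmem _ htc2C).2
    have hsplit : (⟨(t * c) ^ 2, htc2C⟩ : ↥C) = μ cC * ⟨t ^ 2, ht2C⟩ * cC := Subtype.ext (by
      push_cast
      rw [hμapp, pow_two, pow_two]
      group
      rfl)
    rw [hsplit, map_mul, map_mul, hinv cC, hcC', hψ0t2, mul_one, inv_mul_cancel]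
  have htb2 : (π (t * c)) ^ 2 = 1 := by
    rw [← map_pow]
    exact (hπ _).2 htc2T
  obtain ⟨fb, hfb⟩ := exists_hom_zmod2 (π (t * c)) htb2
  let f : DInf →* G ⧸ T := Monoid.Coprod.lift fa fb
  set a : DInf := Monoid.Coprod.inl (Multiplicative.ofAdd (1 : ZMod 2)) with hadef
  set b : DInf := Monoid.Coprod.inr (Multiplicative.ofAdd (1 : ZMod 2)) with hbdef
  have hfa' : f a = π t := by
    rw [hadef]
    rw [Monoid.Coprod.lift_apply_inl]
    exact hfa
  have hfb' : f b = π (t * c) := by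
    rw [hbdef]
    rw [Monoid.Coprod.lift_apply_inr]
    exact hfb
  have hmul1 : (Multiplicative.ofAdd (1 : ZMod 2)) * (Multiplicative.ofAdd (1 : ZMod 2)) = 1 := by
    decide
  have ha2 : a * a = 1 := by
    rw [hadef, ← map_mul, hmul1, map_one]
  have hb2 : b * b = 1 := by
    rw [hbdef, ← map_mul, hmul1, map_one]
  have hainv : a⁻¹ = a := inv_eq_of_mul_eq_one_left ha2
  have hbinv : b⁻¹ = b := inv_eq_of_mul_eq_one_left hb2
  have hconjab : a * (a * b) * a⁻¹ = (a * b)⁻¹ := by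
    rw [hainv, mul_inv_rev, hainv, hbinv]
    calc a * (a * b) * a = a * a * (b * a) := by group
      _ = b * a := by rw [ha2, one_mul]
  have hkey : ∀ k : ℤ, (a * b) ^ k * a = a * (a * b) ^ (-k) := by
    intro k
    have h1 : (a * (a * b) * a⁻¹) ^ (-k) = a * (a * b) ^ (-k) * a⁻¹ := conj_zpow
    rw [hconjab, inv_zpow, ← zpow_neg, neg_neg] at h1
    calc (a * b) ^ k * a = (a * (a * b) ^ (-k) * a⁻¹) * a := by rw [← h1]
      _ = a * (a * b) ^ (-k) := by group
  have hzmod2 : ∀ x : Multiplicative (ZMod 2), x = 1 ∨ x = Multiplicative.ofAdd 1 := by decide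
  have hword : ∀ w : DInf, ∃ k : ℤ, w = (a * b) ^ k ∨ w = a * (a * b) ^ k := by
    intro w
    induction w using Monoid.Coprod.induction_on with
    | inl m =>
      rcases hzmod2 m with h | h
      · exact ⟨0, Or.inl (by rw [h, map_one, zpow_zero])⟩
      · exact ⟨0, Or.inr (by rw [h, zpow_zero, mul_one, hadef])⟩
    | inr m =>
      rcases hzmod2 m with h | h
      · exact ⟨0, Or.inl (by rw [h, map_one, zpow_zero])⟩
      · refine ⟨1, Or.inr ?_⟩
        rw [h, zpow_one, ← mul_assoc, ha2, one_mul, hbdef]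
    | mul x y hx hy =>
      obtain ⟨k, hk⟩ := hx
      obtain ⟨j, hj⟩ := hy
      rcases hk with hk | hk <;> rcases hj with hj | hj
      · exact ⟨k + j, Or.inl (by rw [hk, hj, zpow_add])⟩
      · refine ⟨-k + j, Or.inr ?_⟩
        calc x * y = ((a * b) ^ k * a) * (a * b) ^ j := by rw [hk, hj, mul_assoc]
          _ = a * (a * b) ^ (-k) * (a * b) ^ j := by rw [hkey]
          _ = a * (a * b) ^ (-k + j) := by rw [mul_assoc, ← zpow_add]
      · exact ⟨k + j, Or.inr (by rw [hk, hj, mul_assoc, ← zpow_add])⟩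
      · refine ⟨-k + j, Or.inl ?_⟩
        calc x * y = a * ((a * b) ^ k * a) * (a * b) ^ j := by
              rw [hk, hj]; group
          _ = a * (a * (a * b) ^ (-k)) * (a * b) ^ j := by rw [hkey]
          _ = (a * a) * ((a * b) ^ (-k) * (a * b) ^ j) := by group
          _ = (a * b) ^ (-k + j) := by rw [ha2, one_mul, ← zpow_add]
  have hfab : ∀ k : ℤ, f ((a * b) ^ k) = π (c ^ k) := by
    intro k
    have h1 : f (a * b) = π c := by
      rw [map_mul, hfa', hfb', ← map_mul]
      have h2 : t * (t * c) = t ^ 2 * c := by rw [pow_two, mul_assoc]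
      rw [h2, map_mul, (hπ _).2 ht2T, one_mul]
    rw [map_zpow, h1, ← map_zpow]
  have hfw2 : ∀ k : ℤ, f (a * (a * b) ^ k) = π (t * c ^ k) := by
    intro k
    rw [map_mul, hfa', hfab, ← map_mul]
  have hinjf : Function.Injective f := by
    apply (injective_iff_map_eq_one f).2
    intro w hw
    obtain ⟨k, hk | hk⟩ := hword w
    · rw [hk, hfab] at hw
      have h1 : c ^ k ∈ T := (hπ _).1 hw
      have h2 : (⟨c ^ k, zpow_mem cC.2 k⟩ : ↥C) = cC ^ k := Subtype.ext (by simp [hcdef])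
      have h3 : ψ0 (cC ^ k) = 1 := by
        rw [← h2]
        exact (hTmem _ _).1 h1
      rw [map_zpow, hcC'] at h3
      have h4 : k = 0 := mz_zpow_eq_one hzne h3
      rw [hk, h4, zpow_zero]
    · rw [hk, hfw2] at hw
      have h1 : t * c ^ k ∈ T := (hπ _).1 hw
      have h2 : t ∈ C := by
        have h3 := hTle h1
        have h4 : t = (t * c ^ k) * (c ^ k)⁻¹ := by group
        rw [h4]
        exact mul_mem h3 (inv_mem (zpow_mem cC.2 k))
      exact absurd h2 htC
  have hsurjf : Function.Surjective f := by
    intro q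
    obtain ⟨x, rfl⟩ := QuotientGroup.mk'_surjective T q
    rcases hcoset x with hx | hx
    · obtain ⟨k, hk⟩ := hrange ⟨x, hx⟩
      refine ⟨(a * b) ^ k, ?_⟩
      rw [hfab]
      show (QuotientGroup.mk (c ^ k) : G ⧸ T) = QuotientGroup.mk x
      rw [QuotientGroup.eq]
      have hmem : (c ^ k)⁻¹ * x ∈ C := mul_mem (inv_mem (zpow_mem cC.2 k)) hx
      apply (hTmem _ hmem).2
      have hsplit : (⟨(c ^ k)⁻¹ * x, hmem⟩ : ↥C) = (cC ^ k)⁻¹ * ⟨x, hx⟩ :=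
        Subtype.ext (by simp [hcdef])
      rw [hsplit, map_mul, map_inv, map_zpow, hcC', hk, inv_mul_cancel]
    · obtain ⟨k, hk⟩ := hrange ⟨t⁻¹ * x, hx⟩
      refine ⟨a * (a * b) ^ k, ?_⟩
      rw [hfw2]
      show (QuotientGroup.mk (t * c ^ k) : G ⧸ T) = QuotientGroup.mk x
      rw [QuotientGroup.eq]
      have heq : (t * c ^ k)⁻¹ * x = (c ^ k)⁻¹ * (t⁻¹ * x) := by group
      rw [heq]
      have hmem : (c ^ k)⁻¹ * (t⁻¹ * x) ∈ C := mul_mem (inv_mem (zpow_mem cC.2 k)) hx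
      apply (hTmem _ hmem).2
      have hsplit : (⟨(c ^ k)⁻¹ * (t⁻¹ * x), hmem⟩ : ↥C) = (cC ^ k)⁻¹ * ⟨t⁻¹ * x, hx⟩ :=
        Subtype.ext (by simp [hcdef])
      rw [hsplit, map_mul, map_inv, map_zpow, hcC', hk, inv_mul_cancel]
  let e := MulEquiv.ofBijective f ⟨hinjf, hsurjf⟩
  refine ⟨e.symm.toMonoidHom.comp π, e.symm.surjective.comp (QuotientGroup.mk'_surjective T), ?_⟩
  have hkeq : (e.symm.toMonoidHom.comp π).ker = T := by
    ext x
    simp only [MonoidHom.mem_ker, MonoidHom.comp_apply]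
    constructor
    · intro h
      have h1 : π x = 1 := e.symm.injective (by simp only [map_one]; exact h)
      exact (hπ x).1 h1
    · intro h
      rw [(hπ x).2 h, map_one]
  rw [hkeq]
  exact hTfin

end VCAux

/-- Every virtually cyclic group (a group with a cyclic subgroup of finite index) is
either finite, or finite-by-(infinite cyclic) (there is an exact sequence
`1 → H → G → ℤ → 1` with `H` finite), or finite-by-(infinite dihedral) (there is an
exact sequence `1 → H → G → D_∞ → 1` with `H` finite). -/
theorem stmt_6 (G : Type) [Group G]
    (hvc : ∃ H : Subgroup G, IsCyclic H ∧ H.FiniteIndex) :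
    Finite G ∨
    (∃ φ : G →* Multiplicative ℤ, Function.Surjective φ ∧ Finite φ.ker) ∨
    (∃ φ : G →* DInf, Function.Surjective φ ∧ Finite φ.ker) := by
  rcases finite_or_infinite G with hG | hG
  · exact Or.inl hG
  obtain ⟨H, hHc, hHfi⟩ := hvc
  haveI := hHfi
  haveI := hHc
  have hnotfin : ∀ K : Subgroup G, K.FiniteIndex → ¬Finite K := by
    intro K h1 h2
    haveI := h1; haveI := h2
    have hfin : Finite G := Finite.of_equiv _ (Subgroup.groupEquivQuotientProdSubgroup (s := K)).symm
    exact not_finite G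
  haveI : IsCyclic ↥H.normalCore :=
    isCyclic_of_surjective _ (Subgroup.subgroupOfEquivOfLe H.normalCore_le).surjective
  obtain ⟨⟨g, hgK⟩, hgen⟩ := IsCyclic.exists_generator (α := ↥H.normalCore)
  have hzp : Subgroup.zpowers g = H.normalCore := by
    apply le_antisymm
    · exact Subgroup.zpowers_le.2 hgK
    · intro x hx
      obtain ⟨k, hk⟩ := Subgroup.mem_zpowers_iff.1 (hgen ⟨x, hx⟩)
      exact Subgroup.mem_zpowers_iff.2 ⟨k, by simpa using congrArg Subtype.val hk⟩
  haveI hfiN : (Subgroup.zpowers g).FiniteIndex := by rw [hzp]; infer_instance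
  haveI hnN : (Subgroup.zpowers g).Normal := by rw [hzp]; infer_instance
  have hg : ¬IsOfFinOrder g := by
    intro h
    exact hnotfin (Subgroup.zpowers g) hfiN h.finite_zpowers.to_subtype
  have hdi : ∀ x : G, x * g * x⁻¹ = g ∨ x * g * x⁻¹ = g⁻¹ := by
    intro x
    obtain ⟨k, hk⟩ := Subgroup.mem_zpowers_iff.1 (hnN.conj_mem g (Subgroup.mem_zpowers g) x)
    obtain ⟨j, hj⟩ := Subgroup.mem_zpowers_iff.1 (hnN.conj_mem g (Subgroup.mem_zpowers g) x⁻¹)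
    have hj' : g ^ j = x⁻¹ * g * x := by
      rw [hj]; group
    have hgjk : g ^ (j * k) = g ^ (1 : ℤ) := by
      have h1 : x⁻¹ * (x * g * x⁻¹) * x = g := by group
      rw [← hk] at h1
      have h2 : x⁻¹ * g ^ k * x = (x⁻¹ * g * x) ^ k := by
        have := conj_zpow (i := k) (a := x⁻¹) (b := g)
        simpa using this.symm
      rw [h2, ← hj', ← zpow_mul] at h1
      rw [h1, zpow_one]
    have hjk : j * k = 1 :=
      injective_zpow_iff_not_isOfFinOrder.2 hg hgjk
    rcases Int.isUnit_iff.1 (IsUnit.of_mul_eq_one (a := k) j (by rw [mul_comm]; exact hjk)) with h | h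
    · left
      rw [← hk, h, zpow_one]
    · right
      rw [← hk, h]
      simp
  by_cases hcen : ∀ x : G, x * g * x⁻¹ = g
  · have hc : ∀ x : G, x * g = g * x := by
      intro x
      have h := hcen x
      rwa [mul_inv_eq_iff_eq_mul] at h
    obtain ⟨ψ, hψ, hker, -⟩ := VCAux.core g hg hc
    have hx0 : ψ g ≠ 1 := by
      have h1 := hψ 1
      rw [zpow_one] at h1
      rw [h1]
      intro h
      have h2 := Multiplicative.ofAdd.injective (h.trans ofAdd_zero.symm)
      simp only [one_mul] at h2
      exact hfiN.index_ne_zero (by exact_mod_cast h2)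
    obtain ⟨φ, h1, h2⟩ := VCAux.toZ ψ hker hx0
    exact Or.inr (Or.inl ⟨φ, h1, h2⟩)
  · push_neg at hcen
    obtain ⟨t, ht0⟩ := hcen
    have ht : t * g * t⁻¹ = g⁻¹ := (hdi t).resolve_left ht0
    obtain ⟨φ, h1, h2⟩ := VCAux.dihedral g t hg hdi ht
    exact Or.inr (Or.inr ⟨φ, h1, h2⟩)
end

section
/- A group G fits into an exact sequence 1 → H → G → D_∞ → 1 with H finite (i.e. is virtually cyclic of type VC2) if and only if G is isomorphic to an amalgamated free product K₁ *_H K₂ where K₁, K₂ are finite groups each containing H as an index-2 subgroup. -/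
open Monoid Function

namespace Stmt7

/-- The nontrivial element of `Multiplicative (ZMod 2)`. -/
def a : Multiplicative (ZMod 2) := Multiplicative.ofAdd 1

lemma a_mul_a : a * a = 1 := by decide
lemma a_ne_one : a ≠ 1 := by decide
lemma z2_cases (z : Multiplicative (ZMod 2)) : z = 1 ∨ z = a := by revert z; decide

open scoped Classical in
/-- The quotient map by an index two subgroup. -/
noncomputable def toZ2 {K : Type*} [Group K] (N : Subgroup K) (hN : N.index = 2) :
    K →* Multiplicative (ZMod 2) where
  toFun k := if k ∈ N then 1 else a
  map_one' := if_pos N.one_mem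
  map_mul' x y := by
    by_cases hx : x ∈ N <;> by_cases hy : y ∈ N <;>
      · simp only [Subgroup.mul_mem_iff_of_index_two hN, hx, hy, iff_true, iff_false,
          not_true, not_false_iff, iff_self]
        simp [hx, hy, a_mul_a]

lemma toZ2_eq_one {K : Type*} [Group K] {N : Subgroup K} (hN : N.index = 2) {k : K}
    (h : k ∈ N) : toZ2 N hN k = 1 := by
  simp only [toZ2, MonoidHom.coe_mk, OneHom.coe_mk, if_pos h]

lemma toZ2_eq_a {K : Type*} [Group K] {N : Subgroup K} (hN : N.index = 2) {k : K}
    (h : k ∉ N) : toZ2 N hN k = a := by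
  simp only [toZ2, MonoidHom.coe_mk, OneHom.coe_mk, if_neg h]

/-- The two inclusions of `Multiplicative (ZMod 2)` into `DInf`. -/
def inlr : Bool → (Multiplicative (ZMod 2) →* DInf)
  | false => Coprod.inl
  | true => Coprod.inr

lemma inlr_injective (i : Bool) : Injective (inlr i) := by
  cases i
  · exact Coprod.inl_injective
  · exact Coprod.inr_injective

section chi

variable {H : Type*} [Group H] {K : Bool → Type*} [∀ i, Group (K i)]
  (φ : ∀ i, H →* K i) (hidx : ∀ i, ((φ i).range.index = 2))

/-- The canonical map from the pushout to `DInf`. -/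
noncomputable def chi : PushoutI φ →* DInf :=
  PushoutI.lift (fun i => (inlr i).comp (toZ2 (φ i).range (hidx i))) 1
    (by
      intro i
      ext h
      simp [toZ2_eq_one (hidx i) (MonoidHom.mem_range.2 ⟨h, rfl⟩)])

lemma chi_of (i : Bool) (k : K i) :
    chi φ hidx (PushoutI.of i k) = inlr i (toZ2 (φ i).range (hidx i) k) :=
  PushoutI.lift_of _ _ _ _

lemma chi_base (h : H) : chi φ hidx (PushoutI.base φ h) = 1 :=
  PushoutI.lift_base _ _ _ _

include hidx in
lemma exists_not_mem_range (i : Bool) : ∃ k : K i, k ∉ (φ i).range := by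
  by_contra h
  push_neg at h
  have htop : (φ i).range = ⊤ := (Subgroup.eq_top_iff' _).2 h
  have h2 := hidx i
  rw [htop, Subgroup.index_top] at h2
  omega

lemma chi_surjective : Surjective (chi φ hidx) := by
  intro x
  induction x using Coprod.induction_on with
  | inl m =>
    rcases z2_cases m with rfl | rfl
    · exact ⟨1, by simp⟩
    · obtain ⟨k, hk⟩ := exists_not_mem_range φ hidx false
      exact ⟨PushoutI.of false k, by rw [chi_of, toZ2_eq_a _ hk]; rfl⟩
  | inr m =>
    rcases z2_cases m with rfl | rfl
    · exact ⟨1, by simp⟩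
    · obtain ⟨k, hk⟩ := exists_not_mem_range φ hidx true
      exact ⟨PushoutI.of true k, by rw [chi_of, toZ2_eq_a _ hk]; rfl⟩
  | mul x y hx hy =>
    obtain ⟨g, rfl⟩ := hx
    obtain ⟨g', rfl⟩ := hy
    exact ⟨g * g', map_mul _ _ _⟩

end chi

/-! ### A faithful-enough action of `DInf` on `ℤ` -/

/-- The reflection `n ↦ 1 - n`. -/
def pa : Equiv.Perm ℤ :=
  ⟨fun n => 1 - n, fun n => 1 - n, fun n => by simp, fun n => by simp⟩

/-- The reflection `n ↦ -1 - n`. -/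
def pb : Equiv.Perm ℤ :=
  ⟨fun n => -1 - n, fun n => -1 - n, fun n => by simp, fun n => by simp⟩

lemma pa_apply (n : ℤ) : pa n = 1 - n := rfl
lemma pb_apply (n : ℤ) : pb n = -1 - n := rfl

/-- Homomorphism from `Multiplicative (ZMod 2)` determined by an involution. -/
def z2hom {M : Type*} [Monoid M] (e : M) (he : e * e = 1) : Multiplicative (ZMod 2) →* M where
  toFun z := if z = 1 then 1 else e
  map_one' := if_pos rfl
  map_mul' x y := by
    rcases z2_cases x with rfl | rfl <;> rcases z2_cases y with rfl | rfl <;>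
      simp [a_mul_a, a_ne_one, he]

lemma z2hom_a {M : Type*} [Monoid M] (e : M) (he : e * e = 1) : z2hom e he a = e := by
  simp only [z2hom, MonoidHom.coe_mk, OneHom.coe_mk, if_neg a_ne_one]

lemma pa_invol : pa * pa = 1 := by
  ext n
  simp [pa, Equiv.Perm.mul_apply]

lemma pb_invol : pb * pb = 1 := by
  ext n
  simp [pb, Equiv.Perm.mul_apply]

/-- The action of `DInf` on `ℤ`. -/
noncomputable def rho : DInf →* Equiv.Perm ℤ :=
  Coprod.lift (z2hom pa pa_invol) (z2hom pb pb_invol)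

lemma rho_inlr_a (i : Bool) : rho (inlr i a) = cond i pb pa := by
  cases i <;>
    simp [rho, inlr, Coprod.lift_apply_inl, Coprod.lift_apply_inr, z2hom_a]

/-- The value at `0` of an alternating word. -/
noncomputable def altVal (l : List Bool) : ℤ :=
  rho ((l.map fun i => inlr i a).prod) 0

lemma altVal_nil : altVal [] = 0 := by
  simp only [altVal, List.map_nil, List.prod_nil, map_one]
  rfl

lemma altVal_cons (b : Bool) (l : List Bool) :
    altVal (b :: l) = (cond b pb pa) (altVal l) := by
  simp only [altVal, List.map_cons, List.prod_cons, map_mul, Equiv.Perm.mul_apply, rho_inlr_a]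

lemma altVal_sign (l : List Bool) (b : Bool) (h : (b :: l).Chain' (· ≠ ·)) :
    cond b (altVal (b :: l) < 0) (0 < altVal (b :: l)) := by
  induction l generalizing b with
  | nil =>
    cases b
    · rw [cond_false, altVal_cons, altVal_nil, cond_false, pa_apply]; omega
    · rw [cond_true, altVal_cons, altVal_nil, cond_true, pb_apply]; omega
  | cons b' t ih =>
    have hne : b ≠ b' := (List.isChain_cons_cons.1 h).1
    have h' := ih b' (List.isChain_cons_cons.1 h).2
    cases b <;> cases b' <;> simp only [cond_false, cond_true] at h' ⊢ <;>
        first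
        | exact absurd rfl hne
        | · rw [altVal_cons]
            first
            | rw [cond_false, pa_apply]
            | rw [cond_true, pb_apply]
            omega

lemma alt_prod_ne_one (l : List Bool) (hl : l.Chain' (· ≠ ·)) (hne : l ≠ []) :
    ((l.map fun i => inlr i a).prod) ≠ 1 := by
  cases l with
  | nil => exact absurd rfl hne
  | cons b t =>
    intro h
    have hs := altVal_sign t b hl
    have h0 : altVal (b :: t) = 0 := by
      rw [altVal, h, map_one]
      rfl
    cases b <;> simp only [cond_false, cond_true, h0] at hs <;> omega

section ker

variable {H : Type*} [Group H] {K : Bool → Type*} [∀ i, Group (K i)]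
  (φ : ∀ i, H →* K i) (hidx : ∀ i, ((φ i).range.index = 2))

lemma not_mem_range_of_mem_set {d : PushoutI.NormalWord.Transversal φ} {i : Bool} {g : K i}
    (hg : g ∈ d.set i) (hg1 : g ≠ 1) : g ∉ (φ i).range := by
  intro hr
  have hc := d.compl i
  have h1r : (1 : K i) ∈ ((φ i).range : Set (K i)) := (φ i).range.one_mem
  have h1s : (1 : K i) ∈ d.set i := d.one_mem i
  have heq := hc.1 (a₁ := (⟨⟨g, hr⟩, ⟨1, h1s⟩⟩ : ((φ i).range : Set (K i)) × d.set i))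
    (a₂ := ⟨⟨1, h1r⟩, ⟨g, hg⟩⟩) (by simp)
  apply hg1
  have := congrArg (fun p => (p.1 : K i)) heq
  simpa using this

lemma mem_base_range_of_chi_eq_one (hinj : ∀ i, Injective (φ i)) {x : PushoutI φ}
    (hx : chi φ hidx x = 1) : x ∈ (PushoutI.base φ).range := by
  classical
  obtain ⟨d⟩ := PushoutI.NormalWord.transversal_nonempty φ hinj
  obtain ⟨w, hprod⟩ : ∃ w : PushoutI.NormalWord d, w.prod = x :=
    ⟨PushoutI.NormalWord.equiv x, Equiv.symm_apply_apply PushoutI.NormalWord.equiv x⟩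
  have hxeq : x = PushoutI.base φ w.head * PushoutI.ofCoprodI w.toWord.prod := by
    rw [← hprod]; rfl
  have hker : chi φ hidx (PushoutI.ofCoprodI w.toWord.prod) = 1 := by
    have h2 := hx
    rw [hxeq, map_mul, chi_base] at h2
    simpa using h2
  have hword : chi φ hidx (PushoutI.ofCoprodI w.toWord.prod)
      = ((w.toList.map Sigma.fst).map fun i => inlr i a).prod := by
    rw [CoprodI.Word.prod, map_list_prod, map_list_prod, List.map_map, List.map_map,
      List.map_map]
    congr 1
    apply List.map_congr_left
    intro l hl
    have h1 : l.2 ≠ 1 := w.ne_one l hl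
    have h2 : l.2 ∈ d.set l.1 := w.normalized l.1 l.2 hl
    have h3 : l.2 ∉ (φ l.1).range := not_mem_range_of_mem_set φ h2 h1
    simp only [Function.comp_apply, PushoutI.ofCoprodI_of, chi_of, toZ2_eq_a _ h3]
  have hchain : (w.toList.map Sigma.fst).Chain' (· ≠ ·) :=
    (List.isChain_map _).2 w.chain_ne
  have hnil : w.toList = [] := by
    by_contra hne
    have hne' : (w.toList.map Sigma.fst) ≠ [] := by simpa using hne
    exact alt_prod_ne_one _ hchain hne' (by rw [← hword, hker])
  refine ⟨w.head, ?_⟩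
  rw [hxeq]
  have hone : w.toWord.prod = 1 := by
    rw [CoprodI.Word.prod, hnil]
    simp
  rw [hone, map_one, mul_one]

end ker

end Stmt7

open Stmt7 Monoid Function

/-- A group `G` fits into an exact sequence `1 → H → G → D_∞ → 1` with `H` finite
(i.e. is virtually cyclic of type VC2) if and only if `G` is isomorphic to an
amalgamated free product `K₁ *_H K₂` where `K₁, K₂` are finite groups each containing
`H` as a subgroup of index `2`. -/
theorem stmt_7 (G : Type) [Group G] :
    (∃ f : G →* DInf, Function.Surjective f ∧ Finite f.ker) ↔
    (∃ (H : Type) (_ : Group H) (K : Bool → Type) (_ : ∀ i, Group (K i))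
        (φ : ∀ i, H →* K i),
      (∀ i, Finite (K i)) ∧
      (∀ i, Function.Injective (φ i)) ∧
      (∀ i, ((φ i).range.index = 2)) ∧
      Nonempty (G ≃* Monoid.PushoutI φ)) := by
  constructor
  · rintro ⟨f, hfs, hfk⟩
    set S : Bool → Subgroup DInf := fun i => (inlr i).range with hS
    set Ki : Bool → Subgroup G := fun i => (S i).comap f with hKi
    have hle : ∀ i, f.ker ≤ Ki i := by
      intro i x hx
      simp only [hKi, Subgroup.mem_comap, MonoidHom.mem_ker.1 hx]
      exact (S i).one_mem
    set φ : ∀ i, ↥f.ker →* ↥(Ki i) := fun i => Subgroup.inclusion (hle i) with hφ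
    have hinj : ∀ i, Injective (φ i) := fun i => Subgroup.inclusion_injective _
    set f' : ∀ i, ↥(Ki i) →* DInf := fun i => f.comp (Ki i).subtype with hf'
    have hker' : ∀ i, (f' i).ker = (φ i).range := by
      intro i
      rw [hφ, Subgroup.inclusion_range]
      ext x
      simp [hf', Subgroup.mem_subgroupOf, MonoidHom.mem_ker]
    have hmemr : ∀ i (k : ↥(Ki i)), k ∈ (φ i).range ↔ f (k : G) = 1 := by
      intro i k
      rw [← hker' i]
      simp [hf', MonoidHom.mem_ker]
    have hrange' : ∀ i, (f' i).range = S i := by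
      intro i
      ext x
      constructor
      · rintro ⟨y, rfl⟩
        exact y.2
      · intro hx
        obtain ⟨g, rfl⟩ := hfs x
        exact ⟨⟨g, hx⟩, rfl⟩
    have hcardS : ∀ i, Nat.card ↥(S i) = 2 := by
      intro i
      have h1 : Nat.card ↥(S i) = Nat.card (Multiplicative (ZMod 2)) :=
        Nat.card_congr (Equiv.ofInjective _ (inlr_injective i)).symm
      rw [h1, Nat.card_eq_fintype_card]
      rfl
    have hidx : ∀ i, ((φ i).range.index = 2) := by
      intro i
      rw [← hker' i, Subgroup.index_ker, hrange' i, hcardS i]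
    have hfinK : ∀ i, Finite ↥(Ki i) := by
      intro i
      have h1 : Finite ↥(f' i).ker := by
        apply Finite.of_injective (fun x : ↥(f' i).ker => (⟨((x : ↥(Ki i)) : G),
          MonoidHom.mem_ker.1 x.2⟩ : ↥f.ker))
        intro x y hxy
        simp only [Subtype.mk.injEq] at hxy
        exact Subtype.ext (Subtype.ext (congrArg (fun z : ↥f.ker => (z : G)) hxy))
      have h2 : Finite ↥(f' i).range := by
        have h3 : Finite ↥(S i) := Nat.finite_of_card_ne_zero (by rw [hcardS i]; omega)
        exact Finite.of_injective _ (Subgroup.inclusion_injective ((hrange' i).le))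
      have h3 : Finite (↥(Ki i) ⧸ (f' i).ker) :=
        Finite.of_equiv _ (QuotientGroup.quotientKerEquivRange (f' i)).symm.toEquiv
      exact Finite.of_equiv _ (Subgroup.groupEquivQuotientProdSubgroup (s := (f' i).ker)).symm
    set L : PushoutI φ →* G := PushoutI.lift (fun i => (Ki i).subtype) f.ker.subtype
      (by intro i; ext x; rfl) with hL
    have hcomm : f.comp L = chi φ hidx := by
      apply PushoutI.hom_ext
      · intro i
        ext k
        simp only [MonoidHom.comp_apply, hL, PushoutI.lift_of, chi_of]
        by_cases hk : k ∈ (φ i).range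
        · rw [toZ2_eq_one _ hk, map_one, Subgroup.coe_subtype]
          exact (hmemr i k).1 hk
        · rw [toZ2_eq_a _ hk, Subgroup.coe_subtype]
          have hkS : f (k : G) ∈ S i := k.2
          obtain ⟨z, hz⟩ := hkS
          rcases z2_cases z with rfl | rfl
          · rw [map_one] at hz
            exact absurd ((hmemr i k).2 hz.symm) hk
          · exact hz.symm
      · ext h
        simp only [MonoidHom.comp_apply, hL, PushoutI.lift_base, chi_base]
        exact MonoidHom.mem_ker.1 h.2
    have hLinj : Injective L := by
      intro x y hxy
      have h1 : L (x * y⁻¹) = 1 := by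
        rw [map_mul, map_inv, hxy, mul_inv_cancel]
      have h2 : chi φ hidx (x * y⁻¹) = 1 := by
        have h2' := congrArg f h1
        rw [map_one] at h2'
        rw [← hcomm]
        exact h2'
      have h3 := mem_base_range_of_chi_eq_one φ hidx hinj h2
      obtain ⟨h, hh⟩ := h3
      have h4 : L (PushoutI.base φ h) = ((h : ↥f.ker) : G) := by
        simp [hL]
      rw [← hh] at h1
      rw [h4] at h1
      have h5 : h = 1 := by
        ext
        exact h1
      rw [h5, map_one] at hh
      exact mul_inv_eq_one.1 hh.symm
    have hLsurj : Surjective L := by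
      have key : ∀ x : DInf, ∀ g : G, f g = x → g ∈ L.range := by
        intro x
        induction x using Coprod.induction_on with
        | inl m =>
          intro g hg
          have hgK : g ∈ Ki false := by
            simp only [hKi, Subgroup.mem_comap]
            exact hg ▸ ⟨m, rfl⟩
          exact ⟨PushoutI.of false ⟨g, hgK⟩, by simp [hL]⟩
        | inr m =>
          intro g hg
          have hgK : g ∈ Ki true := by
            simp only [hKi, Subgroup.mem_comap]
            exact hg ▸ ⟨m, rfl⟩
          exact ⟨PushoutI.of true ⟨g, hgK⟩, by simp [hL]⟩
        | mul x y hx hy =>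
          intro g hg
          obtain ⟨u, hu⟩ := hfs x
          have hu' : u ∈ L.range := hx u hu
          have hv : u⁻¹ * g ∈ L.range := by
            apply hy
            rw [map_mul, map_inv, hu, hg, inv_mul_cancel_left]
          have : g = u * (u⁻¹ * g) := by group
          rw [this]
          exact mul_mem hu' hv
      intro g
      obtain ⟨x, hx⟩ := key (f g) g rfl
      exact ⟨x, hx⟩
    exact ⟨↥f.ker, inferInstance, fun i => ↥(Ki i), fun i => inferInstance, φ,
      hfinK, hinj, hidx, ⟨(MulEquiv.ofBijective L ⟨hLinj, hLsurj⟩).symm⟩⟩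
  · rintro ⟨H, _, K, _, φ, hfin, hinj, hidx, ⟨e⟩⟩
    refine ⟨(chi φ hidx).comp e.toMonoidHom, ?_, ?_⟩
    · exact (chi_surjective φ hidx).comp e.surjective
    · have hH : Finite H := by
        have := hfin false
        exact Finite.of_injective _ (hinj false)
      have hbr : Finite ↥(PushoutI.base φ).range := by
        have h1 : (Set.range (PushoutI.base φ)).Finite := Set.finite_range _
        exact h1.to_subtype
      apply Finite.of_injective (fun x : ↥((chi φ hidx).comp e.toMonoidHom).ker =>
        (⟨e x, mem_base_range_of_chi_eq_one φ hidx hinj (MonoidHom.mem_ker.1 x.2)⟩ :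
          ↥(PushoutI.base φ).range))
      intro x y hxy
      simp only [Subtype.mk.injEq] at hxy
      exact Subtype.ext (e.injective hxy)
end
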